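/- Let d ≥ 2 be an integer, let ζ, η be positive real numbers, and let ρ be a complex number with |ρ| = 1 satisfying ζ·(ρ^{d-1} - 1) + η·(d-1)·(ρ^{d-1} - ρ^{d-2}) = 0. Then ρ = 1. -/

import Mathlib

theorem stmt_17 (d : ℕ) (hd : 2 ≤ d) (ζ η : ℝ) (hζ : 0 < ζ) (hη : 0 < η)
    (ρ : ℂ) (hρ : ‖ρ‖ = 1)
    (heq : (ζ : ℂ) * (ρ ^ (d - 1) - 1) + (η : ℂ) * (d - 1) * (ρ ^ (d - 1) - ρ ^ (d - 2)) = 0) :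
    ρ = 1 := by
  set a := ρ ^ (d - 1) with ha
  set b := ρ ^ (d - 2) with hb
  have hab : ‖a‖ = 1 := by rw [ha, norm_pow, hρ, one_pow]
  have hbb : ‖b‖ = 1 := by rw [hb, norm_pow, hρ, one_pow]
  have hna : a.re ^ 2 + a.im ^ 2 = 1 := by
    have h2 : Complex.normSq a = 1 := by
      rw [Complex.normSq_eq_norm_sq, hab]; norm_num
    rw [Complex.normSq_apply] at h2; nlinarith [h2]
  have hnb : b.re ^ 2 + b.im ^ 2 = 1 := by
    have h2 : Complex.normSq b = 1 := by
      rw [Complex.normSq_eq_norm_sq, hbb]; norm_num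
    rw [Complex.normSq_apply] at h2; nlinarith [h2]
  set e : ℝ := (d : ℝ) - 1 with he
  have he1 : 1 ≤ e := by
    have : (2 : ℝ) ≤ (d : ℝ) := by exact_mod_cast hd
    simp [he]; linarith
  have hdre : ((d : ℂ) - 1).re = e := by simp [he]
  have hdim : ((d : ℂ) - 1).im = 0 := by simp
  have hre : ζ * (a.re - 1) + η * e * (a.re - b.re) = 0 := by
    have := congrArg Complex.re heq
    simpa [Complex.add_re, Complex.mul_re, Complex.mul_im, Complex.sub_re,
      Complex.sub_im, hdre, hdim] using this
  have him : ζ * a.im + η * e * (a.im - b.im) = 0 := by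
    have := congrArg Complex.im heq
    simpa [Complex.add_im, Complex.mul_re, Complex.mul_im, Complex.sub_re,
      Complex.sub_im, hdre, hdim] using this
  have hs : 0 < ζ + η * e := by positivity
  -- solve for a components
  have hare : (ζ + η * e) * a.re = ζ + η * e * b.re := by linarith
  have haim : (ζ + η * e) * a.im = η * e * b.im := by linarith
  have h1 : ((ζ + η * e) * a.re) ^ 2 + ((ζ + η * e) * a.im) ^ 2
      = (ζ + η * e * b.re) ^ 2 + (η * e * b.im) ^ 2 := by rw [hare, haim]
  have key : (ζ + η * e) ^ 2 = (ζ + η * e * b.re) ^ 2 + (η * e * b.im) ^ 2 := by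
    nlinarith [h1, hna]
  have hzero : 2 * ζ * (η * e) * (1 - b.re) = 0 := by
    linear_combination key + (η * e) ^ 2 * hnb
  have hpos : 0 < 2 * ζ * (η * e) := by positivity
  have hbre : b.re = 1 := by
    rcases mul_eq_zero.mp hzero with h | h
    · exact absurd h (ne_of_gt hpos)
    · linarith
  have hbim : b.im = 0 := by
    have h : b.im ^ 2 = 0 := by rw [hbre] at hnb; linarith
    exact pow_eq_zero_iff two_ne_zero |>.mp h
  have hb1 : b = 1 := by
    apply Complex.ext <;> simp [hbre, hbim]
  have hare1 : a.re = 1 := by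
    have h : (ζ + η * e) * a.re = (ζ + η * e) * 1 := by rw [hbre] at hare; linarith
    exact mul_left_cancel₀ (ne_of_gt hs) h
  have haim0 : a.im = 0 := by
    rw [hbim, mul_zero] at haim
    have h : (ζ + η * e) * a.im = (ζ + η * e) * 0 := by linarith
    exact mul_left_cancel₀ (ne_of_gt hs) h
  have ha1 : a = 1 := by apply Complex.ext <;> simp [hare1, haim0]
  have hpow : a = b * ρ := by
    rw [ha, hb, ← pow_succ]
    congr 1
    omega
  rw [ha1, hb1, one_mul] at hpow
  exact hpow.symm
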